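/- Fix γ ∈ (2,3), C ∈ ℝ; set α = (γ−1)/2 and, for each n, R = 2 log n + C. Define r_1, r_2 by cosh(2r_1) = cosh(R)/cos^2(θ_0/2) and cosh(2r_2) = (cosh(R) − 1)/cos^2(θ_0), and let U_1 = {(r,φ): r_1 ≤ r ≤ r_2, 0 ≤ φ ≤ θ_0}. Let F(U_1) = ∫_{U_1} f(r,φ) dr dφ where f(r,φ) = (1/(2π))·α sinh(αr)/(cosh(αR) − 1) for 0 ≤ r ≤ R. Then there exist constants c > 0, θ* > 0 and n_0 such that for all n ≥ n_0 and all θ_0 with 1/√n < θ_0 < θ*, one has F(U_1) ≥ c·n^{−α}·θ_0^3. -/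

import Mathlib

open Real MeasureTheory intervalIntegral

set_option maxHeartbeats 1000000
noncomputable section

/-- The density (in the radial coordinate) of a vertex of the hyperbolic random graph:
`f(r) = (1/(2π))·α sinh(αr)/(cosh(αR) − 1)` for `0 ≤ r ≤ R` and `0` otherwise. -/
def radialDensity (α R r : ℝ) : ℝ :=
  if 0 ≤ r ∧ r ≤ R then (1 / (2 * π)) * α * Real.sinh (α * r) / (Real.cosh (α * R) - 1)
  else 0

lemma my_integral_sinh_mul (α a b : ℝ) (hα : α ≠ 0) :
    ∫ r in a..b, Real.sinh (α * r) = (Real.cosh (α * b) - Real.cosh (α * a)) / α := by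
  have h : ∀ r ∈ Set.uIcc a b,
      HasDerivAt (fun s => Real.cosh (α * s) / α) (Real.sinh (α * r)) r := by
    intro r _
    have h1 : HasDerivAt (fun s : ℝ => α * s) α r := by
      simpa using (hasDerivAt_id r).const_mul α
    have h2 := (h1.cosh).div_const α
    simpa [mul_div_assoc, mul_div_cancel_left₀, hα] using h2
  have hc : Continuous fun r => Real.sinh (α * r) :=
    Real.continuous_sinh.comp (continuous_const.mul continuous_id)
  rw [intervalIntegral.integral_eq_sub_of_hasDerivAt h (hc.intervalIntegrable a b)]
  ring

lemma my_integral_sinh (a b : ℝ) :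
    ∫ r in a..b, Real.sinh r = Real.cosh b - Real.cosh a := by
  have := my_integral_sinh_mul 1 a b one_ne_zero
  simpa using this

lemma cosh_sub_cosh_ge (a b : ℝ) (hab : a ≤ b) :
    Real.sinh a * (b - a) ≤ Real.cosh b - Real.cosh a := by
  rw [← my_integral_sinh a b]
  have h1 : ∫ _r in a..b, Real.sinh a = (b - a) * Real.sinh a := by
    simp [intervalIntegral.integral_const, smul_eq_mul]
  calc Real.sinh a * (b - a) = ∫ _r in a..b, Real.sinh a := by rw [h1]; ring
    _ ≤ ∫ r in a..b, Real.sinh r := by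
        apply intervalIntegral.integral_mono_on hab (intervalIntegrable_const)
          (Real.continuous_sinh.intervalIntegrable a b)
        intro x hx
        exact Real.sinh_le_sinh.2 hx.1

lemma cosh_sub_cosh_le (a b : ℝ) (hab : a ≤ b) :
    Real.cosh b - Real.cosh a ≤ Real.sinh b * (b - a) := by
  rw [← my_integral_sinh a b]
  have h1 : ∫ _r in a..b, Real.sinh b = (b - a) * Real.sinh b := by
    simp [intervalIntegral.integral_const, smul_eq_mul]
  calc (∫ r in a..b, Real.sinh r) ≤ ∫ _r in a..b, Real.sinh b := by
        apply intervalIntegral.integral_mono_on hab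
          (Real.continuous_sinh.intervalIntegrable a b) (intervalIntegrable_const)
        intro x hx
        exact Real.sinh_le_sinh.2 hx.2
    _ = Real.sinh b * (b - a) := by rw [h1]; ring

lemma half_exp_le_cosh (x : ℝ) : Real.exp x / 2 ≤ Real.cosh x := by
  rw [Real.cosh_eq]
  have := Real.exp_pos (-x)
  linarith

lemma cosh_le_exp_self {x : ℝ} (hx : 0 ≤ x) : Real.cosh x ≤ Real.exp x := by
  rw [Real.cosh_eq]
  have : Real.exp (-x) ≤ Real.exp x := Real.exp_le_exp.2 (by linarith)
  linarith

lemma quarter_exp_le_sinh {x : ℝ} (hx : 1 ≤ x) : Real.exp x / 4 ≤ Real.sinh x := by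
  rw [Real.sinh_eq]
  have h1 : Real.exp (-x) ≤ Real.exp (-1) := Real.exp_le_exp.2 (by linarith)
  have hmul : Real.exp (-1) * Real.exp 1 = 1 := by
    rw [← Real.exp_add]; norm_num
  have he : (2:ℝ) ≤ Real.exp 1 := by nlinarith [Real.add_one_le_exp (1:ℝ)]
  have h2 : Real.exp (-1) ≤ 1 / 2 := by nlinarith [Real.exp_pos (-1)]
  have h3 : (1:ℝ) ≤ Real.exp x := by
    have := Real.exp_le_exp.2 hx
    nlinarith [Real.add_one_le_exp (1:ℝ)]
  linarith

lemma radial_integral_eval (α R a b : ℝ) (hα : α ≠ 0) (ha : 0 ≤ a) (hab : a ≤ b)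
    (hbR : b ≤ R) :
    ∫ r in a..b, radialDensity α R r
      = 1 / (2 * π) * ((Real.cosh (α * b) - Real.cosh (α * a)) / (Real.cosh (α * R) - 1)) := by
  have hcongr : Set.EqOn (radialDensity α R)
      (fun r => (1 / (2 * π) * α / (Real.cosh (α * R) - 1)) * Real.sinh (α * r))
      (Set.uIcc a b) := by
    intro r hr
    rw [Set.uIcc_of_le hab] at hr
    unfold radialDensity
    rw [if_pos ⟨le_trans ha hr.1, le_trans hr.2 hbR⟩]
    ring
  rw [intervalIntegral.integral_congr hcongr, intervalIntegral.integral_const_mul,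
    my_integral_sinh_mul α a b hα]
  rcases eq_or_ne (Real.cosh (α * R) - 1) 0 with h | h
  · simp [h]
  · field_simp

/-- For `γ ∈ (2,3)`, `C ∈ ℝ`, `α = (γ−1)/2` and `R = 2 log n + C`: there are `c > 0`,
`θ* > 0` and `n₀` such that for all `n ≥ n₀` and all `θ₀` with `1/√n < θ₀ < θ*`, the
probability mass `F(U₁) = ∫_{0}^{θ₀} ∫_{r₁}^{r₂} f(r) dr dφ` of the hyperbolic annular
sector `U₁` (where `cosh(2r₁) = cosh R / cos²(θ₀/2)` and
`cosh(2r₂) = (cosh R − 1)/cos² θ₀`) is at least `c·n^{−α}·θ₀³`. -/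
theorem hyperbolic_sector_mass_lower_bound (γ C : ℝ) (hγ : γ ∈ Set.Ioo (2 : ℝ) 3) :
    ∃ c : ℝ, 0 < c ∧ ∃ θstar : ℝ, 0 < θstar ∧ ∃ n₀ : ℕ, ∀ n : ℕ, n₀ ≤ n →
      ∀ θ₀ : ℝ, 1 / Real.sqrt n < θ₀ → θ₀ < θstar →
        ∀ r₁ r₂ : ℝ, 0 ≤ r₁ → 0 ≤ r₂ →
          Real.cosh (2 * r₁) =
              Real.cosh (2 * Real.log n + C) / Real.cos (θ₀ / 2) ^ 2 →
          Real.cosh (2 * r₂) =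
              (Real.cosh (2 * Real.log n + C) - 1) / Real.cos θ₀ ^ 2 →
          c * (n : ℝ) ^ (-((γ - 1) / 2)) * θ₀ ^ 3 ≤
            ∫ _φ in (0 : ℝ)..θ₀, ∫ r in r₁..r₂,
              radialDensity ((γ - 1) / 2) (2 * Real.log n + C) r := by
  obtain ⟨hγ2, hγ3⟩ := hγ
  set α := (γ - 1) / 2 with hα_def
  clear_value α
  have hα1 : 1 / 2 < α := by rw [hα_def]; linarith
  have hαpos : 0 < α := by linarith
  have hα2 : α < 1 := by rw [hα_def]; linarith
  have hπ : 0 < π := Real.pi_pos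
  have hπ2 : (0:ℝ) < π ^ 2 := by positivity
  refine ⟨α * Real.exp (-(α * (C + Real.log 2)) / 2) / (32 * π ^ 3), by positivity,
    1 / 2, by norm_num, ?_⟩
  set c := α * Real.exp (-(α * (C + Real.log 2)) / 2) / (32 * π ^ 3) with hc_def
  clear_value c
  obtain ⟨n₀, hn₀⟩ := exists_nat_gt (max (4 * π ^ 2 * Real.exp (-C)) (Real.exp ((5 - C) / 2)))
  refine ⟨n₀, ?_⟩
  intro n hn θ₀ hθ₀l hθ₀u r₁ r₂ hr₁0 hr₂0 hcosh1 hcosh2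
  have hnn₀ : (n₀ : ℝ) ≤ n := Nat.cast_le.2 hn
  have hnM : max (4 * π ^ 2 * Real.exp (-C)) (Real.exp ((5 - C) / 2)) < (n : ℝ) :=
    lt_of_lt_of_le hn₀ hnn₀
  have hnM1 : 4 * π ^ 2 * Real.exp (-C) < (n : ℝ) := lt_of_le_of_lt (le_max_left _ _) hnM
  have hnM2 : Real.exp ((5 - C) / 2) < (n : ℝ) := lt_of_le_of_lt (le_max_right _ _) hnM
  have hnpos : (0 : ℝ) < n := lt_trans (Real.exp_pos _) hnM2
  set R := 2 * Real.log n + C with hR_def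
  clear_value R
  have hlogn : (5 - C) / 2 ≤ Real.log n := (Real.le_log_iff_exp_le hnpos).2 hnM2.le
  have hR5 : 5 ≤ R := by rw [hR_def]; linarith
  have hRpos : 0 < R := by linarith
  have hexpR : Real.exp R = Real.exp C * (n : ℝ) ^ 2 := by
    rw [hR_def, Real.exp_add, two_mul, Real.exp_add, Real.exp_log hnpos]; ring
  have hcoshR_pos : 0 < Real.cosh R := Real.cosh_pos R
  have hcoshR_lb : Real.exp C * (n : ℝ) ^ 2 / 2 ≤ Real.cosh R := by
    rw [← hexpR]; exact half_exp_le_cosh R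
  -- θ₀ facts
  have hθpos : 0 < θ₀ :=
    lt_of_le_of_lt (by positivity : (0:ℝ) ≤ 1 / Real.sqrt n) hθ₀l
  have hθsq : 1 / (n : ℝ) ≤ θ₀ ^ 2 := by
    have h1 : (1 / Real.sqrt n) ^ 2 ≤ θ₀ ^ 2 :=
      pow_le_pow_left₀ (by positivity) hθ₀l.le 2
    have h2 : (1 / Real.sqrt n) ^ 2 = 1 / (n : ℝ) := by
      rw [div_pow, one_pow, Real.sq_sqrt hnpos.le]
    linarith only [h1, h2 ▸ h1]
  have hθhalf : θ₀ < 1 / 2 := hθ₀u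
  have hθsq4 : θ₀ ^ 2 < 1 / 4 := by nlinarith only [hθpos, hθhalf]
  -- cosine bounds
  have hcosθ : 7 / 8 ≤ Real.cos θ₀ := by
    have h := Real.one_sub_sq_div_two_le_cos (x := θ₀)
    linarith only [h, hθsq4]
  have hcosθ1 : Real.cos θ₀ ≤ 1 := Real.cos_le_one θ₀
  have hcoshlf : 7 / 8 ≤ Real.cos (θ₀ / 2) := by
    have h := Real.one_sub_sq_div_two_le_cos (x := θ₀ / 2)
    have heq : (θ₀ / 2) ^ 2 = θ₀ ^ 2 / 4 := by ring
    linarith only [h, heq ▸ h, hθsq4]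
  have hcoshlf1 : Real.cos (θ₀ / 2) ≤ 1 := Real.cos_le_one _
  have hcos_sq : 3 / 4 ≤ Real.cos θ₀ ^ 2 := by nlinarith only [hcosθ, hcosθ1]
  have hcoshlf_sq : 3 / 4 ≤ Real.cos (θ₀ / 2) ^ 2 := by nlinarith only [hcoshlf, hcoshlf1]
  have hcos_sq1 : Real.cos θ₀ ^ 2 ≤ 1 := by nlinarith only [hcosθ, hcosθ1]
  have hcoshlf_sq1 : Real.cos (θ₀ / 2) ^ 2 ≤ 1 := by nlinarith only [hcoshlf, hcoshlf1]
  have hcos_sq_pos : (0:ℝ) < Real.cos θ₀ ^ 2 := by linarith only [hcos_sq]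
  have hcoshlf_sq_pos : (0:ℝ) < Real.cos (θ₀ / 2) ^ 2 := by linarith only [hcoshlf_sq]
  have hhalf_sq : Real.cos (θ₀ / 2) ^ 2 = (1 + Real.cos θ₀) / 2 := by
    have h := Real.cos_sq (θ₀ / 2)
    rw [mul_div_cancel₀ θ₀ (two_ne_zero)] at h
    linarith only [h]
  -- cosh R * θ₀² is large
  have hcoshRθ : 2 * π ^ 2 ≤ Real.cosh R * θ₀ ^ 2 := by
    have h1 : Real.exp C * (n : ℝ) ^ 2 / 2 * (1 / n) ≤ Real.cosh R * θ₀ ^ 2 :=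
      mul_le_mul hcoshR_lb hθsq (by positivity) hcoshR_pos.le
    have h2 : Real.exp C * (n : ℝ) ^ 2 / 2 * (1 / n) = Real.exp C * n / 2 := by
      field_simp
    have h4 : Real.exp C * (4 * π ^ 2 * Real.exp (-C)) ≤ Real.exp C * n :=
      mul_le_mul_of_nonneg_left hnM1.le (Real.exp_pos C).le
    have hxx : Real.exp C * Real.exp (-C) = 1 := by rw [← Real.exp_add]; simp
    have h5 : Real.exp C * (4 * π ^ 2 * Real.exp (-C)) = 4 * π ^ 2 := by
      calc Real.exp C * (4 * π ^ 2 * Real.exp (-C))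
          = 4 * π ^ 2 * (Real.exp C * Real.exp (-C)) := by ring
        _ = 4 * π ^ 2 := by rw [hxx, mul_one]
    linarith only [h1, h2 ▸ h1, h4, h5, h5 ▸ h4]
  -- gap between cosh(2r₂) and cosh(2r₁)
  have habs : |θ₀| ≤ π := by
    rw [abs_of_pos hθpos]
    linarith only [Real.pi_gt_three, hθhalf]
  have hcq := Real.cos_le_one_sub_mul_cos_sq habs
  have hjordan : 2 * θ₀ ^ 2 ≤ π ^ 2 * (1 - Real.cos θ₀) := by
    have hcancel : π ^ 2 * (2 / π ^ 2 * θ₀ ^ 2) = 2 * θ₀ ^ 2 := by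
      field_simp
    nlinarith only [hcq, hπ2, hcancel]
  have hsq_diff : 1 - Real.cos θ₀ ≤ Real.cos (θ₀ / 2) ^ 2 - Real.cos θ₀ ^ 2 := by
    rw [hhalf_sq]
    nlinarith only [hcosθ, hcosθ1]
  have hprod1 : Real.cos θ₀ ^ 2 * Real.cos (θ₀ / 2) ^ 2 ≤ 1 := by
    nlinarith only [hcos_sq1, hcoshlf_sq1, hcos_sq_pos, hcoshlf_sq_pos]
  have hd_nonneg : 0 ≤ Real.cos (θ₀ / 2) ^ 2 - Real.cos θ₀ ^ 2 := by
    linarith only [hsq_diff, hcosθ1]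
  have hinvdiff : Real.cos (θ₀ / 2) ^ 2 - Real.cos θ₀ ^ 2 ≤
      1 / Real.cos θ₀ ^ 2 - 1 / Real.cos (θ₀ / 2) ^ 2 := by
    have hiden : 1 / Real.cos θ₀ ^ 2 - 1 / Real.cos (θ₀ / 2) ^ 2
        = (Real.cos (θ₀ / 2) ^ 2 - Real.cos θ₀ ^ 2) /
          (Real.cos θ₀ ^ 2 * Real.cos (θ₀ / 2) ^ 2) := by
      field_simp
    rw [hiden, le_div_iff₀ (by positivity)]
    calc (Real.cos (θ₀ / 2) ^ 2 - Real.cos θ₀ ^ 2) * (Real.cos θ₀ ^ 2 * Real.cos (θ₀ / 2) ^ 2)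
        ≤ (Real.cos (θ₀ / 2) ^ 2 - Real.cos θ₀ ^ 2) * 1 :=
          mul_le_mul_of_nonneg_left hprod1 hd_nonneg
      _ = Real.cos (θ₀ / 2) ^ 2 - Real.cos θ₀ ^ 2 := mul_one _
  have hkey2 : 2 * θ₀ ^ 2 ≤ π ^ 2 * (1 / Real.cos θ₀ ^ 2 - 1 / Real.cos (θ₀ / 2) ^ 2) := by
    have h := mul_le_mul_of_nonneg_left (le_trans hsq_diff hinvdiff) hπ2.le
    linarith only [hjordan, h]
  have hinv_le : 1 / Real.cos θ₀ ^ 2 ≤ 4 / 3 := by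
    rw [div_le_div_iff₀ hcos_sq_pos (by norm_num)]
    linarith only [hcos_sq]
  have hD : Real.cosh R * θ₀ ^ 2 ≤ π ^ 2 * (Real.cosh (2 * r₂) - Real.cosh (2 * r₁)) := by
    rw [hcosh1, hcosh2]
    have hexpand : (Real.cosh R - 1) / Real.cos θ₀ ^ 2 - Real.cosh R / Real.cos (θ₀ / 2) ^ 2
        = Real.cosh R * (1 / Real.cos θ₀ ^ 2 - 1 / Real.cos (θ₀ / 2) ^ 2)
          - 1 / Real.cos θ₀ ^ 2 := by ring
    rw [hexpand]
    have hA : Real.cosh R * (2 * θ₀ ^ 2) ≤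
        Real.cosh R * (π ^ 2 * (1 / Real.cos θ₀ ^ 2 - 1 / Real.cos (θ₀ / 2) ^ 2)) :=
      mul_le_mul_of_nonneg_left hkey2 hcoshR_pos.le
    have hB : π ^ 2 * (1 / Real.cos θ₀ ^ 2) ≤ π ^ 2 * (4 / 3) :=
      mul_le_mul_of_nonneg_left hinv_le hπ2.le
    nlinarith only [hA, hB, hcoshRθ, hπ2]
  have hDpos : 0 < Real.cosh (2 * r₂) - Real.cosh (2 * r₁) := by
    nlinarith only [hD, hπ2, hcoshR_pos, hθpos, mul_pos hcoshR_pos (pow_pos hθpos 2)]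
  have hr12 : r₁ < r₂ := by
    have h := Real.cosh_lt_cosh.1 (by linarith only [hDpos] :
      Real.cosh (2 * r₁) < Real.cosh (2 * r₂))
    rw [abs_of_nonneg (by linarith only [hr₁0] : (0:ℝ) ≤ 2 * r₁),
      abs_of_nonneg (by linarith only [hr₂0] : (0:ℝ) ≤ 2 * r₂)] at h
    linarith only [h]
  -- r₂ ≤ R
  have hexpR4 : 4 ≤ Real.exp R := by
    have h := Real.exp_le_exp.2 hR5
    nlinarith only [h, Real.add_one_le_exp (5:ℝ)]
  have hcosh2r₂_le : Real.cosh (2 * r₂) ≤ 2 * Real.cosh R := by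
    rw [hcosh2, div_le_iff₀ hcos_sq_pos]
    nlinarith only [Real.one_le_cosh R, hcos_sq, hcoshR_pos]
  have hr₂R : r₂ ≤ R := by
    have hcoshRexp : Real.cosh R ≤ Real.exp R := cosh_le_exp_self hRpos.le
    have h2R : Real.exp (2 * R) / 2 ≤ Real.cosh (2 * R) := half_exp_le_cosh _
    have hexp2R : Real.exp (2 * R) = Real.exp R * Real.exp R := by
      rw [two_mul, Real.exp_add]
    have h2 : Real.cosh (2 * r₂) ≤ Real.cosh (2 * R) := by
      nlinarith only [hcosh2r₂_le, hcoshRexp, h2R, hexp2R, hexpR4, Real.exp_pos R]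
    have h := Real.cosh_le_cosh.1 h2
    rw [abs_of_nonneg (by linarith only [hr₂0] : (0:ℝ) ≤ 2 * r₂),
      abs_of_nonneg (by linarith only [hRpos] : (0:ℝ) ≤ 2 * R)] at h
    linarith only [h]
  -- r₁ is large
  have hr₁lb : R - Real.log 2 ≤ 2 * r₁ := by
    have ha : Real.exp (R - Real.log 2) = Real.exp R / 2 := by
      rw [Real.exp_sub, Real.exp_log two_pos]
    have hb : Real.cosh (2 * r₁) ≤ Real.exp (2 * r₁) :=
      cosh_le_exp_self (by linarith only [hr₁0])
    have hc' : Real.cosh R ≤ Real.cosh (2 * r₁) := by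
      rw [hcosh1, le_div_iff₀ hcoshlf_sq_pos]
      nlinarith only [hcoshlf_sq1, hcoshR_pos]
    have hd := half_exp_le_cosh R
    have h1 : Real.exp (R - Real.log 2) ≤ Real.exp (2 * r₁) := by
      rw [ha]; linarith only [hb, hc', hd]
    exact Real.exp_le_exp.1 h1
  have hlog2 : Real.log 2 < 1 := by
    have := Real.log_two_lt_d9; linarith only [this]
  have hr₁2 : 2 ≤ r₁ := by linarith only [hr₁lb, hR5, hlog2]
  have hαr₁ : 1 ≤ α * r₁ := by nlinarith only [hα1, hr₁2]
  -- gap lower bound on r₂ - r₁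
  have hgap : θ₀ ^ 2 / (4 * π ^ 2) ≤ r₂ - r₁ := by
    have h1 := cosh_sub_cosh_le (2 * r₁) (2 * r₂) (by linarith only [hr12])
    have h2 : Real.sinh (2 * r₂) ≤ Real.cosh (2 * r₂) := (Real.sinh_lt_cosh _).le
    have hs : Real.sinh (2 * r₂) ≤ 2 * Real.cosh R := le_trans h2 hcosh2r₂_le
    have h3 : Real.sinh (2 * r₂) * (2 * r₂ - 2 * r₁) ≤
        2 * Real.cosh R * (2 * r₂ - 2 * r₁) :=
      mul_le_mul_of_nonneg_right hs (by linarith only [hr12])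
    have h4 : Real.cosh R * θ₀ ^ 2 ≤ π ^ 2 * (2 * Real.cosh R * (2 * r₂ - 2 * r₁)) :=
      le_trans hD (mul_le_mul_of_nonneg_left (le_trans h1 h3) hπ2.le)
    have h5 : π ^ 2 * (2 * Real.cosh R * (2 * r₂ - 2 * r₁))
        = Real.cosh R * (4 * π ^ 2 * (r₂ - r₁)) := by ring
    have h6 : Real.cosh R * θ₀ ^ 2 ≤ Real.cosh R * (4 * π ^ 2 * (r₂ - r₁)) := by
      linarith only [h4, h5 ▸ h4]
    have h7 : θ₀ ^ 2 ≤ 4 * π ^ 2 * (r₂ - r₁) := (mul_le_mul_iff_right₀ hcoshR_pos).1 h6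
    rw [div_le_iff₀ (by positivity)]
    linarith only [h7]
  -- evaluate the double integral
  have hinner : ∫ r in r₁..r₂, radialDensity α R r
      = 1 / (2 * π) * ((Real.cosh (α * r₂) - Real.cosh (α * r₁)) /
          (Real.cosh (α * R) - 1)) :=
    radial_integral_eval α R r₁ r₂ hαpos.ne' hr₁0 hr12.le hr₂R
  have houter : (∫ _φ in (0 : ℝ)..θ₀, ∫ r in r₁..r₂, radialDensity α R r)
      = θ₀ * (1 / (2 * π) * ((Real.cosh (α * r₂) - Real.cosh (α * r₁)) /
          (Real.cosh (α * R) - 1))) := by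
    rw [intervalIntegral.integral_const, hinner]
    simp [smul_eq_mul]
  rw [houter]
  -- numerator lower bound
  have hnum1 : Real.sinh (α * r₁) * (α * r₂ - α * r₁) ≤
      Real.cosh (α * r₂) - Real.cosh (α * r₁) :=
    cosh_sub_cosh_ge (α * r₁) (α * r₂) (by nlinarith only [hαpos, hr12])
  have hsinh_lb : Real.exp (α * (R - Real.log 2) / 2) / 4 ≤ Real.sinh (α * r₁) := by
    have hhalf' : (R - Real.log 2) / 2 ≤ r₁ := by linarith only [hr₁lb]
    have hle : α * ((R - Real.log 2) / 2) ≤ α * r₁ :=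
      mul_le_mul_of_nonneg_left hhalf' hαpos.le
    have h1 : Real.exp (α * (R - Real.log 2) / 2) ≤ Real.exp (α * r₁) :=
      Real.exp_le_exp.2 (by linarith only [hle])
    have h2 := quarter_exp_le_sinh hαr₁
    linarith only [h1, h2]
  have hsinh_nonneg : 0 ≤ Real.sinh (α * r₁) :=
    le_trans (by positivity) hsinh_lb
  have hgap2 : α * (θ₀ ^ 2 / (4 * π ^ 2)) ≤ α * r₂ - α * r₁ := by
    have h := mul_le_mul_of_nonneg_left hgap hαpos.le
    linarith only [h]
  have hnum2 : Real.exp (α * (R - Real.log 2) / 2) / 4 * (α * (θ₀ ^ 2 / (4 * π ^ 2))) ≤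
      Real.cosh (α * r₂) - Real.cosh (α * r₁) := by
    have h1 : Real.exp (α * (R - Real.log 2) / 2) / 4 * (α * (θ₀ ^ 2 / (4 * π ^ 2))) ≤
        Real.sinh (α * r₁) * (α * r₂ - α * r₁) :=
      mul_le_mul hsinh_lb hgap2 (by positivity) hsinh_nonneg
    linarith only [h1, hnum1]
  have hnum_nonneg : 0 ≤ Real.exp (α * (R - Real.log 2) / 2) / 4 *
      (α * (θ₀ ^ 2 / (4 * π ^ 2))) := by positivity
  -- denominator bounds
  have hden_pos : 0 < Real.cosh (α * R) - 1 := by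
    have h := Real.one_lt_cosh.2 (ne_of_gt (mul_pos hαpos hRpos))
    linarith only [h]
  have hden_ub : Real.cosh (α * R) - 1 ≤ Real.exp (α * R) := by
    have h := cosh_le_exp_self (le_of_lt (mul_pos hαpos hRpos))
    linarith only [h]
  -- combine
  have hfrac : Real.exp (α * (R - Real.log 2) / 2) / 4 * (α * (θ₀ ^ 2 / (4 * π ^ 2))) /
      Real.exp (α * R) ≤
      (Real.cosh (α * r₂) - Real.cosh (α * r₁)) / (Real.cosh (α * R) - 1) :=
    div_le_div₀ (le_trans hnum_nonneg hnum2) hnum2 hden_pos hden_ub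
  have hrpow : (n : ℝ) ^ (-α) = Real.exp (-(α * Real.log n)) := by
    rw [Real.rpow_def_of_pos hnpos]; ring_nf
  have hexpeq : Real.exp (-(α * (C + Real.log 2)) / 2) * Real.exp (-(α * Real.log n))
      = Real.exp (α * (R - Real.log 2) / 2) * (Real.exp (α * R))⁻¹ := by
    rw [← Real.exp_add, ← Real.exp_neg, ← Real.exp_add]
    congr 1
    rw [hR_def]; ring
  have hfinal_eq : c * (n : ℝ) ^ (-α) * θ₀ ^ 3 =
      θ₀ * (1 / (2 * π) * (Real.exp (α * (R - Real.log 2) / 2) / 4 *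
        (α * (θ₀ ^ 2 / (4 * π ^ 2))) / Real.exp (α * R))) := by
    rw [hrpow, hc_def]
    calc α * Real.exp (-(α * (C + Real.log 2)) / 2) / (32 * π ^ 3) *
          Real.exp (-(α * Real.log n)) * θ₀ ^ 3
        = α * θ₀ ^ 3 / (32 * π ^ 3) *
            (Real.exp (-(α * (C + Real.log 2)) / 2) * Real.exp (-(α * Real.log n))) := by
          ring
      _ = α * θ₀ ^ 3 / (32 * π ^ 3) *
            (Real.exp (α * (R - Real.log 2) / 2) * (Real.exp (α * R))⁻¹) := by
          rw [hexpeq]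
      _ = θ₀ * (1 / (2 * π) * (Real.exp (α * (R - Real.log 2) / 2) / 4 *
            (α * (θ₀ ^ 2 / (4 * π ^ 2))) / Real.exp (α * R))) := by
          field_simp
          ring
  rw [hfinal_eq]
  apply mul_le_mul_of_nonneg_left _ hθpos.le
  exact mul_le_mul_of_nonneg_left hfrac (by positivity)
end
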